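/- Let (V₀, g) be a finite-dimensional positive definite real inner product space with V₀ ≠ 0 and let A₁, A₂ be algebraic curvature tensors on V₀ which are Einstein with Einstein constants a₁ and a₂ > 0 respectively. Then the model M(V₀,g,A₁,A₂) is Jacobi–Ricci commuting and is not Einstein; its Ricci operator ρ is complex diagonalizable with spectrum of the complexification equal to {2a₁ + 2a₂·i, 2a₁ − 2a₂·i}; and the associated complex structure J := (2a₂)⁻¹·(ρ − 2a₁·id) is multiplication by i, i.e. J(x⁺, x⁻) = (−x⁻, x⁺). -/

import Mathlib

open TensorProduct

/-- `f : W⁴ → ℝ` is multilinear over `ℝ` in each of its four slots. -/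
def IsML {W : Type*} [AddCommGroup W] [Module ℝ W] (f : W → W → W → W → ℝ) : Prop :=
  (∀ x x' y z w, f (x + x') y z w = f x y z w + f x' y z w) ∧
  (∀ (c : ℝ) x y z w, f (c • x) y z w = c * f x y z w) ∧
  (∀ x y y' z w, f x (y + y') z w = f x y z w + f x y' z w) ∧
  (∀ (c : ℝ) x y z w, f x (c • y) z w = c * f x y z w) ∧
  (∀ x y z z' w, f x y (z + z') w = f x y z w + f x y z' w) ∧
  (∀ (c : ℝ) x y z w, f x y (c • z) w = c * f x y z w) ∧
  (∀ x y z w w', f x y z (w + w') = f x y z w + f x y z w') ∧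
  (∀ (c : ℝ) x y z w, f x y z (c • w) = c * f x y z w)

/-- The symmetries of the Riemann curvature tensor. -/
def IsCurvSym {W : Type*} [AddCommGroup W] [Module ℝ W] (f : W → W → W → W → ℝ) : Prop :=
  (∀ x y z w, f x y z w = - f y x z w) ∧
  (∀ x y z w, f x y z w = f z w x y) ∧
  (∀ x y z w, f x y z w + f y z x w + f z x y w = 0)

/-- An algebraic curvature tensor: a multilinear map with the curvature symmetries. -/
def IsACT {W : Type*} [AddCommGroup W] [Module ℝ W] (f : W → W → W → W → ℝ) : Prop :=
  IsML f ∧ IsCurvSym f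

/-- The defining value of `⟨ρ x, y⟩`: the trace of `z ↦ ½𝓡(z,x)y + ½𝓡(z,y)x`,
where `R` is the (curried) curvature operator. -/
noncomputable def ricciForm {V : Type*} [AddCommGroup V] [Module ℝ V]
    (R : V →ₗ[ℝ] V →ₗ[ℝ] V →ₗ[ℝ] V) (x y : V) : ℝ :=
  LinearMap.trace ℝ V
    (((1 : ℝ) / 2) • ((R.flip x).flip y) + ((1 : ℝ) / 2) • ((R.flip y).flip x))

/-- The Jacobi--Ricci commuting identity of Lemma 1 (3). -/
def JRComm {V : Type*} [AddCommGroup V] [Module ℝ V]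
    (A : V → V → V → V → ℝ) (ρ : V →ₗ[ℝ] V) : Prop :=
  ∀ v₁ v₂ v₃ v₄ : V,
    A (ρ v₁) v₂ v₃ v₄ = A v₁ (ρ v₂) v₃ v₄ ∧
    A v₁ (ρ v₂) v₃ v₄ = A v₁ v₂ (ρ v₃) v₄ ∧
    A v₁ v₂ (ρ v₃) v₄ = A v₁ v₂ v₃ (ρ v₄)

/-- The ℂ-valued tensor `A₁ + i·A₂`. -/
noncomputable def acx {W : Type*} [AddCommGroup W] [Module ℝ W]
    (A₁ A₂ : W → W → W → W → ℝ) (x y z w : W) : ℂ :=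
  (A₁ x y z w : ℂ) + Complex.I * (A₂ x y z w : ℂ)

/-- The complex multilinear extension `(A₁ + i·A₂)^ℂ` of `A₁ + i·A₂` to the
complexification of `W`, where `W × W` is identified with `W ⊗ ℂ` via
`(x⁺, x⁻) ↔ x⁺ + i·x⁻`. -/
noncomputable def acExt {W : Type*} [AddCommGroup W] [Module ℝ W]
    (A₁ A₂ : W → W → W → W → ℝ) (p q r s : W × W) : ℂ :=
  acx A₁ A₂ p.1 q.1 r.1 s.1
  + Complex.I * (acx A₁ A₂ p.2 q.1 r.1 s.1 + acx A₁ A₂ p.1 q.2 r.1 s.1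
      + acx A₁ A₂ p.1 q.1 r.2 s.1 + acx A₁ A₂ p.1 q.1 r.1 s.2)
  - (acx A₁ A₂ p.2 q.2 r.1 s.1 + acx A₁ A₂ p.2 q.1 r.2 s.1 + acx A₁ A₂ p.2 q.1 r.1 s.2
      + acx A₁ A₂ p.1 q.2 r.2 s.1 + acx A₁ A₂ p.1 q.2 r.1 s.2 + acx A₁ A₂ p.1 q.1 r.2 s.2)
  - Complex.I * (acx A₁ A₂ p.2 q.2 r.2 s.1 + acx A₁ A₂ p.2 q.2 r.1 s.2
      + acx A₁ A₂ p.2 q.1 r.2 s.2 + acx A₁ A₂ p.1 q.2 r.2 s.2)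
  + acx A₁ A₂ p.2 q.2 r.2 s.2

/-- The curvature tensor `A := Re((A₁ + i·A₂)^ℂ)` of the model `M(V₀,g,A₁,A₂)`. -/
noncomputable def modelA {W : Type*} [AddCommGroup W] [Module ℝ W]
    (A₁ A₂ : W → W → W → W → ℝ) (p q r s : W × W) : ℝ :=
  (acExt A₁ A₂ p q r s).re

/-- The inner product `⟨(x⁺,x⁻),(y⁺,y⁻)⟩ = g(x⁺,y⁺) − g(x⁻,y⁻)` of the model
`M(V₀,g,A₁,A₂)`. -/
def modelB {W : Type*} [AddCommGroup W] [Module ℝ W]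
    (g : LinearMap.BilinForm ℝ W) (p q : W × W) : ℝ :=
  g p.1 q.1 - g p.2 q.2

/-- `f` is Einstein with Einstein constant `a` on the positive definite inner product
space `(W, g)`: for every `g`-orthonormal basis `{e_k}` one has
`Σ_k f(x, e_k, e_k, y) = a·g(x,y)`. -/
def IsEinsteinWith {W : Type*} [AddCommGroup W] [Module ℝ W]
    (g : LinearMap.BilinForm ℝ W) (f : W → W → W → W → ℝ) (a : ℝ) : Prop :=
  ∀ (n : ℕ) (b : Module.Basis (Fin n) ℝ W),
    (∀ i j, g (b i) (b j) = if i = j then 1 else 0) →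
    ∀ x y, (∑ k, f x (b k) (b k) y) = a * g x y

/-- `f` is complex diagonalizable: the complexification of `f` acting on `ℂ ⊗ V` is
diagonalizable, i.e. the eigenspaces of the complexified operator span. -/
def IsCDiagonalizable {V : Type*} [AddCommGroup V] [Module ℝ V] (f : V →ₗ[ℝ] V) : Prop :=
  (⨆ μ : ℂ, Module.End.eigenspace (LinearMap.baseChange ℂ f) μ) = ⊤

section helpers
variable {W : Type*} [AddCommGroup W] [Module ℝ W] {f A₁ A₂ : W → W → W → W → ℝ}

lemma IsML.zero₁ (h : IsML f) (y z w : W) : f 0 y z w = 0 := by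
  have := h.2.1 0 0 y z w; simpa using this
lemma IsML.zero₂ (h : IsML f) (x z w : W) : f x 0 z w = 0 := by
  have := h.2.2.2.1 0 x 0 z w; simpa using this
lemma IsML.zero₃ (h : IsML f) (x y w : W) : f x y 0 w = 0 := by
  have := h.2.2.2.2.2.1 0 x y 0 w; simpa using this
lemma IsML.zero₄ (h : IsML f) (x y z : W) : f x y z 0 = 0 := by
  have := h.2.2.2.2.2.2.2 0 x y z 0; simpa using this
lemma IsML.neg₁ (h : IsML f) (x y z w : W) : f (-x) y z w = - f x y z w := by
  have := h.2.1 (-1) x y z w; simpa using this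
lemma IsML.neg₂ (h : IsML f) (x y z w : W) : f x (-y) z w = - f x y z w := by
  have := h.2.2.2.1 (-1) x y z w; simpa using this
lemma IsML.neg₃ (h : IsML f) (x y z w : W) : f x y (-z) w = - f x y z w := by
  have := h.2.2.2.2.2.1 (-1) x y z w; simpa using this
lemma IsML.neg₄ (h : IsML f) (x y z w : W) : f x y z (-w) = - f x y z w := by
  have := h.2.2.2.2.2.2.2 (-1) x y z w; simpa using this

variable (h₁ : IsML A₁) (h₂ : IsML A₂)
include h₁ h₂

lemma acx_zero₁ (y z w : W) : acx A₁ A₂ 0 y z w = 0 := by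
  simp [acx, h₁.zero₁, h₂.zero₁]
lemma acx_zero₂ (x z w : W) : acx A₁ A₂ x 0 z w = 0 := by
  simp [acx, h₁.zero₂, h₂.zero₂]
lemma acx_zero₃ (x y w : W) : acx A₁ A₂ x y 0 w = 0 := by
  simp [acx, h₁.zero₃, h₂.zero₃]
lemma acx_zero₄ (x y z : W) : acx A₁ A₂ x y z 0 = 0 := by
  simp [acx, h₁.zero₄, h₂.zero₄]
lemma acx_neg₁ (x y z w : W) : acx A₁ A₂ (-x) y z w = - acx A₁ A₂ x y z w := by
  simp [acx, h₁.neg₁, h₂.neg₁]; ring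
lemma acx_neg₂ (x y z w : W) : acx A₁ A₂ x (-y) z w = - acx A₁ A₂ x y z w := by
  simp [acx, h₁.neg₂, h₂.neg₂]; ring
lemma acx_neg₃ (x y z w : W) : acx A₁ A₂ x y (-z) w = - acx A₁ A₂ x y z w := by
  simp [acx, h₁.neg₃, h₂.neg₃]; ring
lemma acx_neg₄ (x y z w : W) : acx A₁ A₂ x y z (-w) = - acx A₁ A₂ x y z w := by
  simp [acx, h₁.neg₄, h₂.neg₄]; ring
lemma acx_add₁ (x x' y z w : W) :
    acx A₁ A₂ (x + x') y z w = acx A₁ A₂ x y z w + acx A₁ A₂ x' y z w := by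
  simp [acx, h₁.1, h₂.1]; push_cast; ring
lemma acx_add₂ (x y y' z w : W) :
    acx A₁ A₂ x (y + y') z w = acx A₁ A₂ x y z w + acx A₁ A₂ x y' z w := by
  simp [acx, h₁.2.2.1, h₂.2.2.1]; push_cast; ring
lemma acx_add₃ (x y z z' w : W) :
    acx A₁ A₂ x y (z + z') w = acx A₁ A₂ x y z w + acx A₁ A₂ x y z' w := by
  simp [acx, h₁.2.2.2.2.1, h₂.2.2.2.2.1]; push_cast; ring
lemma acx_add₄ (x y z w w' : W) :
    acx A₁ A₂ x y z (w + w') = acx A₁ A₂ x y z w + acx A₁ A₂ x y z w' := by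
  simp [acx, h₁.2.2.2.2.2.2.1, h₂.2.2.2.2.2.2.1]; push_cast; ring
lemma acx_smul₁ (c : ℝ) (x y z w : W) :
    acx A₁ A₂ (c • x) y z w = (c : ℂ) * acx A₁ A₂ x y z w := by
  simp [acx, h₁.2.1, h₂.2.1]; push_cast; ring
lemma acx_smul₂ (c : ℝ) (x y z w : W) :
    acx A₁ A₂ x (c • y) z w = (c : ℂ) * acx A₁ A₂ x y z w := by
  simp [acx, h₁.2.2.2.1, h₂.2.2.2.1]; push_cast; ring
lemma acx_smul₃ (c : ℝ) (x y z w : W) :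
    acx A₁ A₂ x y (c • z) w = (c : ℂ) * acx A₁ A₂ x y z w := by
  simp [acx, h₁.2.2.2.2.2.1, h₂.2.2.2.2.2.1]; push_cast; ring
lemma acx_smul₄ (c : ℝ) (x y z w : W) :
    acx A₁ A₂ x y z (c • w) = (c : ℂ) * acx A₁ A₂ x y z w := by
  simp [acx, h₁.2.2.2.2.2.2.2, h₂.2.2.2.2.2.2.2]; push_cast; ring

end helpers
section helpers2
variable {W : Type*} [AddCommGroup W] [Module ℝ W] {A₁ A₂ : W → W → W → W → ℝ}
variable (h₁ : IsML A₁) (h₂ : IsML A₂)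
include h₁ h₂

lemma acExt_add₁ (p p' q r s : W × W) :
    acExt A₁ A₂ (p + p') q r s = acExt A₁ A₂ p q r s + acExt A₁ A₂ p' q r s := by
  simp only [acExt, Prod.fst_add, Prod.snd_add, acx_add₁ h₁ h₂]; ring
lemma acExt_add₂ (p q q' r s : W × W) :
    acExt A₁ A₂ p (q + q') r s = acExt A₁ A₂ p q r s + acExt A₁ A₂ p q' r s := by
  simp only [acExt, Prod.fst_add, Prod.snd_add, acx_add₂ h₁ h₂]; ring
lemma acExt_add₃ (p q r r' s : W × W) :
    acExt A₁ A₂ p q (r + r') s = acExt A₁ A₂ p q r s + acExt A₁ A₂ p q r' s := by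
  simp only [acExt, Prod.fst_add, Prod.snd_add, acx_add₃ h₁ h₂]; ring
lemma acExt_add₄ (p q r s s' : W × W) :
    acExt A₁ A₂ p q r (s + s') = acExt A₁ A₂ p q r s + acExt A₁ A₂ p q r s' := by
  simp only [acExt, Prod.fst_add, Prod.snd_add, acx_add₄ h₁ h₂]; ring
lemma acExt_smul₁ (c : ℝ) (p q r s : W × W) :
    acExt A₁ A₂ (c • p) q r s = (c : ℂ) * acExt A₁ A₂ p q r s := by
  simp only [acExt, Prod.smul_fst, Prod.smul_snd, acx_smul₁ h₁ h₂]; ring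
lemma acExt_smul₂ (c : ℝ) (p q r s : W × W) :
    acExt A₁ A₂ p (c • q) r s = (c : ℂ) * acExt A₁ A₂ p q r s := by
  simp only [acExt, Prod.smul_fst, Prod.smul_snd, acx_smul₂ h₁ h₂]; ring
lemma acExt_smul₃ (c : ℝ) (p q r s : W × W) :
    acExt A₁ A₂ p q (c • r) s = (c : ℂ) * acExt A₁ A₂ p q r s := by
  simp only [acExt, Prod.smul_fst, Prod.smul_snd, acx_smul₃ h₁ h₂]; ring
lemma acExt_smul₄ (c : ℝ) (p q r s : W × W) :
    acExt A₁ A₂ p q r (c • s) = (c : ℂ) * acExt A₁ A₂ p q r s := by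
  simp only [acExt, Prod.smul_fst, Prod.smul_snd, acx_smul₄ h₁ h₂]; ring
lemma acExt_J₁ (p q r s : W × W) :
    acExt A₁ A₂ (-p.2, p.1) q r s = Complex.I * acExt A₁ A₂ p q r s := by
  simp only [acExt, acx_neg₁ h₁ h₂]
  ring_nf
  simp only [Complex.I_sq]
  ring
lemma acExt_J₂ (p q r s : W × W) :
    acExt A₁ A₂ p (-q.2, q.1) r s = Complex.I * acExt A₁ A₂ p q r s := by
  simp only [acExt, acx_neg₂ h₁ h₂]
  ring_nf
  simp only [Complex.I_sq]
  ring
lemma acExt_J₃ (p q r s : W × W) :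
    acExt A₁ A₂ p q (-r.2, r.1) s = Complex.I * acExt A₁ A₂ p q r s := by
  simp only [acExt, acx_neg₃ h₁ h₂]
  ring_nf
  simp only [Complex.I_sq]
  ring
lemma acExt_J₄ (p q r s : W × W) :
    acExt A₁ A₂ p q r (-s.2, s.1) = Complex.I * acExt A₁ A₂ p q r s := by
  simp only [acExt, acx_neg₄ h₁ h₂]
  ring_nf
  simp only [Complex.I_sq]
  ring

lemma modelA_diag₁ (e : W) (p q : W × W) :
    modelA A₁ A₂ (e, 0) p q (e, 0) =
      A₁ e p.1 q.1 e - A₂ e p.2 q.1 e - A₂ e p.1 q.2 e - A₁ e p.2 q.2 e := by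
  simp [modelA, acExt, acx, acx_zero₁ h₁ h₂, acx_zero₄ h₁ h₂, h₁.zero₁, h₂.zero₁,
    h₁.zero₄, h₂.zero₄]
  ring
lemma modelA_diag₂ (e : W) (p q : W × W) :
    modelA A₁ A₂ (0, e) p q (0, e) =
      -(A₁ e p.1 q.1 e - A₂ e p.2 q.1 e - A₂ e p.1 q.2 e - A₁ e p.2 q.2 e) := by
  simp [modelA, acExt, acx, acx_zero₁ h₁ h₂, acx_zero₄ h₁ h₂, h₁.zero₁, h₂.zero₁,
    h₁.zero₄, h₂.zero₄]
  ring

end helpers2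
section helpers3
variable {V₀ : Type*} [AddCommGroup V₀] [Module ℝ V₀] [FiniteDimensional ℝ V₀]

lemma exists_on_basis (g : LinearMap.BilinForm ℝ V₀)
    (hgsymm : ∀ x y, g x y = g y x)
    (hgpos : ∀ x : V₀, x ≠ 0 → 0 < g x x) :
    ∃ b : Module.Basis (Fin (Module.finrank ℝ V₀)) ℝ V₀,
      ∀ i j, g (b i) (b j) = if i = j then 1 else 0 := by
  letI core : InnerProductSpace.Core ℝ V₀ :=
    { inner := fun x y => g x y
      conj_inner_symm := fun x y => by simpa using hgsymm y x
      re_inner_nonneg := fun x => by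
        rcases eq_or_ne x 0 with h | h
        · simp [h]
        · exact le_of_lt (by simpa using hgpos x h)
      definite := fun x hx => by
        by_contra h
        exact absurd (by simpa using hx) (ne_of_gt (hgpos x h))
      add_left := fun x y z => by simp
      smul_left := fun x y r => by simp }
  letI : NormedAddCommGroup V₀ := core.toNormedAddCommGroup
  letI : InnerProductSpace ℝ V₀ := InnerProductSpace.ofCore core.toCore
  refine ⟨(stdOrthonormalBasis ℝ V₀).toBasis, fun i j => ?_⟩
  have h := (stdOrthonormalBasis ℝ V₀).orthonormal
  rw [orthonormal_iff_ite] at h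
  have h' := h i j
  simp only [OrthonormalBasis.coe_toBasis]
  exact h'

lemma repr_eq_g {n : ℕ} (g : LinearMap.BilinForm ℝ V₀) (b : Module.Basis (Fin n) ℝ V₀)
    (hON : ∀ i j, g (b i) (b j) = if i = j then 1 else 0) (x : V₀) (k : Fin n) :
    b.repr x k = g x (b k) := by
  have : (b.coord k : V₀ →ₗ[ℝ] ℝ) = g.flip (b k) := by
    apply b.ext
    intro i
    simp [Module.Basis.coord_apply, hON i k, LinearMap.flip_apply, Finsupp.single_apply]
  simpa [Module.Basis.coord_apply, LinearMap.flip_apply] using LinearMap.congr_fun this x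

lemma trace_formula {n : ℕ} (g : LinearMap.BilinForm ℝ V₀) (b : Module.Basis (Fin n) ℝ V₀)
    (hON : ∀ i j, g (b i) (b j) = if i = j then 1 else 0)
    (T : (V₀ × V₀) →ₗ[ℝ] (V₀ × V₀)) :
    LinearMap.trace ℝ (V₀ × V₀) T =
      (∑ k, modelB g (T (b k, 0)) (b k, 0)) - ∑ k, modelB g (T (0, b k)) (0, b k) := by
  classical
  have hb := b.prod b
  rw [LinearMap.trace_eq_matrix_trace ℝ (b.prod b) T]
  rw [Matrix.trace]
  simp only [Matrix.diag, LinearMap.toMatrix_apply]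
  rw [Fintype.sum_sum_type]
  have h1 : ∀ k : Fin n, (b.prod b).repr (T ((b.prod b) (Sum.inl k))) (Sum.inl k)
      = modelB g (T (b k, 0)) (b k, 0) := by
    intro k
    rw [Module.Basis.prod_repr_inl]
    have : (b.prod b) (Sum.inl k) = (b k, 0) := by
      ext
      · exact b.prod_apply_inl_fst b k
      · exact b.prod_apply_inl_snd b k
    rw [this, repr_eq_g g b hON]
    simp [modelB]
  have h2 : ∀ k : Fin n, (b.prod b).repr (T ((b.prod b) (Sum.inr k))) (Sum.inr k)
      = - modelB g (T (0, b k)) (0, b k) := by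
    intro k
    rw [Module.Basis.prod_repr_inr]
    have : (b.prod b) (Sum.inr k) = (0, b k) := by
      ext
      · exact b.prod_apply_inr_fst b k
      · exact b.prod_apply_inr_snd b k
    rw [this, repr_eq_g g b hON]
    simp [modelB]
  simp only [h1, h2]
  simp [sub_eq_add_neg]

end helpers3
section helpers4
variable {V₀ : Type*} [AddCommGroup V₀] [Module ℝ V₀] [FiniteDimensional ℝ V₀]

lemma ricci_eval (g : LinearMap.BilinForm ℝ V₀)
    (hgsymm : ∀ x y, g x y = g y x)
    (hgpos : ∀ x : V₀, x ≠ 0 → 0 < g x x)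
    (A₁ A₂ : V₀ → V₀ → V₀ → V₀ → ℝ) (hA₁ : IsACT A₁) (hA₂ : IsACT A₂)
    (a₁ a₂ : ℝ)
    (hE₁ : IsEinsteinWith g A₁ a₁) (hE₂ : IsEinsteinWith g A₂ a₂)
    (R : (V₀ × V₀) →ₗ[ℝ] (V₀ × V₀) →ₗ[ℝ] (V₀ × V₀) →ₗ[ℝ] (V₀ × V₀))
    (hR : ∀ p q r s, modelB g (R p q r) s = modelA A₁ A₂ p q r s)
    (p q : V₀ × V₀) :
    ricciForm R p q = (2*a₁) * g p.1 q.1 - (2*a₂) * g p.2 q.1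
      - (2*a₂) * g p.1 q.2 - (2*a₁) * g p.2 q.2 := by
  classical
  obtain ⟨b, hON⟩ := exists_on_basis g hgsymm hgpos
  -- trace of the one-sided operator
  have key : ∀ u v : V₀ × V₀,
      LinearMap.trace ℝ (V₀ × V₀) ((R.flip u).flip v) =
        (2*a₁) * g u.1 v.1 - (2*a₂) * g u.2 v.1 - (2*a₂) * g u.1 v.2 - (2*a₁) * g u.2 v.2 := by
    intro u v
    rw [trace_formula g b hON]
    have happ : ∀ z : V₀ × V₀, ((R.flip u).flip v) z = R z u v := by
      intro z; simp [LinearMap.flip_apply]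
    have hterm1 : ∀ k, modelB g (((R.flip u).flip v) (b k, 0)) (b k, 0) =
        A₁ (b k) u.1 v.1 (b k) - A₂ (b k) u.2 v.1 (b k)
          - A₂ (b k) u.1 v.2 (b k) - A₁ (b k) u.2 v.2 (b k) := by
      intro k
      rw [happ, hR]
      exact modelA_diag₁ hA₁.1 hA₂.1 (b k) u v
    have hterm2 : ∀ k, modelB g (((R.flip u).flip v) (0, b k)) (0, b k) =
        -(A₁ (b k) u.1 v.1 (b k) - A₂ (b k) u.2 v.1 (b k)
          - A₂ (b k) u.1 v.2 (b k) - A₁ (b k) u.2 v.2 (b k)) := by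
      intro k
      rw [happ, hR]
      exact modelA_diag₂ hA₁.1 hA₂.1 (b k) u v
    simp only [hterm1, hterm2, Finset.sum_neg_distrib, sub_neg_eq_add]
    have sum1 : ∀ x y : V₀, (∑ k, A₁ (b k) x y (b k)) = a₁ * g x y := by
      intro x y
      have : ∀ k, A₁ (b k) x y (b k) = A₁ y (b k) (b k) x := fun k => hA₁.2.2.1 (b k) x y (b k)
      simp only [this]
      rw [hE₁ _ b hON y x, hgsymm y x]
    have sum2 : ∀ x y : V₀, (∑ k, A₂ (b k) x y (b k)) = a₂ * g x y := by
      intro x y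
      have : ∀ k, A₂ (b k) x y (b k) = A₂ y (b k) (b k) x := fun k => hA₂.2.2.1 (b k) x y (b k)
      simp only [this]
      rw [hE₂ _ b hON y x, hgsymm y x]
    have expand : (∑ k, (A₁ (b k) u.1 v.1 (b k) - A₂ (b k) u.2 v.1 (b k)
          - A₂ (b k) u.1 v.2 (b k) - A₁ (b k) u.2 v.2 (b k))) =
        a₁ * g u.1 v.1 - a₂ * g u.2 v.1 - a₂ * g u.1 v.2 - a₁ * g u.2 v.2 := by
      simp only [Finset.sum_sub_distrib, sum1, sum2]
    rw [expand]
    ring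
  rw [ricciForm, map_add, map_smul, map_smul, key p q, key q p, smul_eq_mul, smul_eq_mul,
    hgsymm q.1 p.1, hgsymm q.2 p.1, hgsymm q.1 p.2, hgsymm q.2 p.2]
  ring

end helpers4
section helpers5
variable {V₀ : Type*} [AddCommGroup V₀] [Module ℝ V₀] [FiniteDimensional ℝ V₀]

lemma rho_eval (g : LinearMap.BilinForm ℝ V₀)
    (hgsymm : ∀ x y, g x y = g y x)
    (hgpos : ∀ x : V₀, x ≠ 0 → 0 < g x x)
    (A₁ A₂ : V₀ → V₀ → V₀ → V₀ → ℝ) (hA₁ : IsACT A₁) (hA₂ : IsACT A₂)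
    (a₁ a₂ : ℝ)
    (hE₁ : IsEinsteinWith g A₁ a₁) (hE₂ : IsEinsteinWith g A₂ a₂)
    (R : (V₀ × V₀) →ₗ[ℝ] (V₀ × V₀) →ₗ[ℝ] (V₀ × V₀) →ₗ[ℝ] (V₀ × V₀))
    (hR : ∀ p q r s, modelB g (R p q r) s = modelA A₁ A₂ p q r s)
    (ρ : (V₀ × V₀) →ₗ[ℝ] (V₀ × V₀))
    (hρ : ∀ p q, modelB g (ρ p) q = ricciForm R p q)
    (p : V₀ × V₀) :
    ρ p = ((2*a₁) • p.1 - (2*a₂) • p.2, (2*a₂) • p.1 + (2*a₁) • p.2) := by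
  set m : V₀ × V₀ := ((2*a₁) • p.1 - (2*a₂) • p.2, (2*a₂) • p.1 + (2*a₁) • p.2) with hm
  have hB : ∀ q, modelB g (ρ p) q = modelB g m q := by
    intro q
    rw [hρ, ricci_eval g hgsymm hgpos A₁ A₂ hA₁ hA₂ a₁ a₂ hE₁ hE₂ R hR p q]
    simp only [hm, modelB, map_sub, map_add, map_smul, LinearMap.sub_apply,
      LinearMap.add_apply, LinearMap.smul_apply, smul_eq_mul]
    ring
  have hzero : ∀ q, modelB g (ρ p - m) q = 0 := by
    intro q
    have : modelB g (ρ p - m) q = modelB g (ρ p) q - modelB g m q := by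
      simp only [modelB, Prod.fst_sub, Prod.snd_sub, map_sub, LinearMap.sub_apply]
      ring
    rw [this, hB, sub_self]
  set d := ρ p - m with hd
  have h0 : g d.1 d.1 + g d.2 d.2 = 0 := by
    have := hzero (d.1, -d.2)
    simpa [modelB, map_neg, sub_neg_eq_add] using this
  have hge : ∀ x : V₀, 0 ≤ g x x := by
    intro x
    rcases eq_or_ne x 0 with h | h
    · simp [h]
    · exact le_of_lt (hgpos x h)
  have h1 : d.1 = 0 := by
    by_contra h
    have := hgpos d.1 h
    nlinarith [hge d.2]
  have h2 : d.2 = 0 := by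
    by_contra h
    have := hgpos d.2 h
    nlinarith [hge d.1]
  have : d = 0 := Prod.ext h1 h2
  have := sub_eq_zero.mp (hd ▸ this)
  exact this

end helpers5
section helpers6
variable {W : Type*} [AddCommGroup W] [Module ℝ W] {A₁ A₂ : W → W → W → W → ℝ}
variable (h₁ : IsML A₁) (h₂ : IsML A₂)
include h₁ h₂

lemma acExt_rot₁ (a₁ a₂ : ℝ) (p q r s : W × W) :
    acExt A₁ A₂ ((2*a₁) • p.1 - (2*a₂) • p.2, (2*a₂) • p.1 + (2*a₁) • p.2) q r s
      = (((2*a₁ : ℝ) : ℂ) + ((2*a₂ : ℝ) : ℂ) * Complex.I) * acExt A₁ A₂ p q r s := by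
  have hp : ((2*a₁) • p.1 - (2*a₂) • p.2, (2*a₂) • p.1 + (2*a₁) • p.2)
      = (2*a₁) • p + (2*a₂) • ((-p.2, p.1) : W × W) := by
    refine Prod.ext ?_ ?_ <;> simp [sub_eq_add_neg] <;> abel
  rw [hp, acExt_add₁ h₁ h₂, acExt_smul₁ h₁ h₂, acExt_smul₁ h₁ h₂, acExt_J₁ h₁ h₂]
  ring
lemma acExt_rot₂ (a₁ a₂ : ℝ) (p q r s : W × W) :
    acExt A₁ A₂ p ((2*a₁) • q.1 - (2*a₂) • q.2, (2*a₂) • q.1 + (2*a₁) • q.2) r s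
      = (((2*a₁ : ℝ) : ℂ) + ((2*a₂ : ℝ) : ℂ) * Complex.I) * acExt A₁ A₂ p q r s := by
  have hp : ((2*a₁) • q.1 - (2*a₂) • q.2, (2*a₂) • q.1 + (2*a₁) • q.2)
      = (2*a₁) • q + (2*a₂) • ((-q.2, q.1) : W × W) := by
    refine Prod.ext ?_ ?_ <;> simp [sub_eq_add_neg] <;> abel
  rw [hp, acExt_add₂ h₁ h₂, acExt_smul₂ h₁ h₂, acExt_smul₂ h₁ h₂, acExt_J₂ h₁ h₂]
  ring
lemma acExt_rot₃ (a₁ a₂ : ℝ) (p q r s : W × W) :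
    acExt A₁ A₂ p q ((2*a₁) • r.1 - (2*a₂) • r.2, (2*a₂) • r.1 + (2*a₁) • r.2) s
      = (((2*a₁ : ℝ) : ℂ) + ((2*a₂ : ℝ) : ℂ) * Complex.I) * acExt A₁ A₂ p q r s := by
  have hp : ((2*a₁) • r.1 - (2*a₂) • r.2, (2*a₂) • r.1 + (2*a₁) • r.2)
      = (2*a₁) • r + (2*a₂) • ((-r.2, r.1) : W × W) := by
    refine Prod.ext ?_ ?_ <;> simp [sub_eq_add_neg] <;> abel
  rw [hp, acExt_add₃ h₁ h₂, acExt_smul₃ h₁ h₂, acExt_smul₃ h₁ h₂, acExt_J₃ h₁ h₂]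
  ring
lemma acExt_rot₄ (a₁ a₂ : ℝ) (p q r s : W × W) :
    acExt A₁ A₂ p q r ((2*a₁) • s.1 - (2*a₂) • s.2, (2*a₂) • s.1 + (2*a₁) • s.2)
      = (((2*a₁ : ℝ) : ℂ) + ((2*a₂ : ℝ) : ℂ) * Complex.I) * acExt A₁ A₂ p q r s := by
  have hp : ((2*a₁) • s.1 - (2*a₂) • s.2, (2*a₂) • s.1 + (2*a₁) • s.2)
      = (2*a₁) • s + (2*a₂) • ((-s.2, s.1) : W × W) := by
    refine Prod.ext ?_ ?_ <;> simp [sub_eq_add_neg] <;> abel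
  rw [hp, acExt_add₄ h₁ h₂, acExt_smul₄ h₁ h₂, acExt_smul₄ h₁ h₂, acExt_J₄ h₁ h₂]
  ring

end helpers6

theorem statement7
    {V₀ : Type*} [AddCommGroup V₀] [Module ℝ V₀] [FiniteDimensional ℝ V₀] [Nontrivial V₀]
    (g : LinearMap.BilinForm ℝ V₀)
    (hgsymm : ∀ x y, g x y = g y x)
    (hgpos : ∀ x : V₀, x ≠ 0 → 0 < g x x)
    (A₁ A₂ : V₀ → V₀ → V₀ → V₀ → ℝ) (hA₁ : IsACT A₁) (hA₂ : IsACT A₂)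
    (a₁ a₂ : ℝ) (ha₂ : 0 < a₂)
    (hE₁ : IsEinsteinWith g A₁ a₁) (hE₂ : IsEinsteinWith g A₂ a₂)
    (R : (V₀ × V₀) →ₗ[ℝ] (V₀ × V₀) →ₗ[ℝ] (V₀ × V₀) →ₗ[ℝ] (V₀ × V₀))
    (hR : ∀ p q r s, modelB g (R p q r) s = modelA A₁ A₂ p q r s)
    (ρ : (V₀ × V₀) →ₗ[ℝ] (V₀ × V₀))
    (hρ : ∀ p q, modelB g (ρ p) q = ricciForm R p q) :
    JRComm (modelA A₁ A₂) ρ ∧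
    (¬ ∃ c : ℝ, ρ = c • LinearMap.id) ∧
    IsCDiagonalizable ρ ∧
    spectrum ℂ (LinearMap.baseChange ℂ ρ) =
      {((2 * a₁ : ℝ) : ℂ) + ((2 * a₂ : ℝ) : ℂ) * Complex.I,
       ((2 * a₁ : ℝ) : ℂ) - ((2 * a₂ : ℝ) : ℂ) * Complex.I} ∧
    (∀ x y : V₀, (2 * a₂)⁻¹ • (ρ (x, y) - (2 * a₁) • (x, y)) = (-y, x)) := by
  have h₁ := hA₁.1
  have h₂ := hA₂.1
  have h2a : (2 * a₂ : ℝ) ≠ 0 := by positivity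
  have hrho : ∀ p : V₀ × V₀,
      ρ p = ((2*a₁) • p.1 - (2*a₂) • p.2, (2*a₂) • p.1 + (2*a₁) • p.2) :=
    rho_eval g hgsymm hgpos A₁ A₂ hA₁ hA₂ a₁ a₂ hE₁ hE₂ R hR ρ hρ
  set μp : ℂ := ((2 * a₁ : ℝ) : ℂ) + ((2 * a₂ : ℝ) : ℂ) * Complex.I with hμp
  set μm : ℂ := ((2 * a₁ : ℝ) : ℂ) - ((2 * a₂ : ℝ) : ℂ) * Complex.I with hμm
  -- Part 1 : Jacobi–Ricci commuting
  have part1 : JRComm (modelA A₁ A₂) ρ := by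
    intro v₁ v₂ v₃ v₄
    have e1 : acExt A₁ A₂ (ρ v₁) v₂ v₃ v₄ = μp * acExt A₁ A₂ v₁ v₂ v₃ v₄ := by
      rw [hrho v₁]; exact acExt_rot₁ h₁ h₂ a₁ a₂ v₁ v₂ v₃ v₄
    have e2 : acExt A₁ A₂ v₁ (ρ v₂) v₃ v₄ = μp * acExt A₁ A₂ v₁ v₂ v₃ v₄ := by
      rw [hrho v₂]; exact acExt_rot₂ h₁ h₂ a₁ a₂ v₁ v₂ v₃ v₄
    have e3 : acExt A₁ A₂ v₁ v₂ (ρ v₃) v₄ = μp * acExt A₁ A₂ v₁ v₂ v₃ v₄ := by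
      rw [hrho v₃]; exact acExt_rot₃ h₁ h₂ a₁ a₂ v₁ v₂ v₃ v₄
    have e4 : acExt A₁ A₂ v₁ v₂ v₃ (ρ v₄) = μp * acExt A₁ A₂ v₁ v₂ v₃ v₄ := by
      rw [hrho v₄]; exact acExt_rot₄ h₁ h₂ a₁ a₂ v₁ v₂ v₃ v₄
    refine ⟨?_, ?_, ?_⟩ <;> simp only [modelA, e1, e2, e3, e4]
  -- Part 2 : not Einstein
  have part2 : ¬ ∃ c : ℝ, ρ = c • LinearMap.id := by
    rintro ⟨c, hc⟩
    obtain ⟨x, hx⟩ := exists_ne (0 : V₀)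
    have h1 := hrho (x, 0)
    rw [hc] at h1
    have h2 : ((2*a₂) • x : V₀) = 0 := by
      have := congrArg Prod.snd h1
      simpa using this.symm
    rcases smul_eq_zero.mp h2 with h | h
    · exact h2a h
    · exact hx h
  -- the quadratic identity for ρ
  have hquadR : ∀ v : V₀ × V₀,
      ρ (ρ v) = (4*a₁) • ρ v - (4*a₁^2 + 4*a₂^2) • v := by
    intro v
    rw [hrho v, hrho ((2*a₁) • v.1 - (2*a₂) • v.2, (2*a₂) • v.1 + (2*a₁) • v.2)]
    refine Prod.ext ?_ ?_ <;>
      simp only [Prod.fst_sub, Prod.snd_sub, Prod.smul_fst, Prod.smul_snd] <;> module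
  set F := LinearMap.baseChange ℂ ρ with hF
  have hquadC : ∀ w : ℂ ⊗[ℝ] (V₀ × V₀),
      F (F w) = (μp + μm) • F w - (μp * μm) • w := by
    have hsum : μp + μm = ((4*a₁ : ℝ) : ℂ) := by rw [hμp, hμm]; push_cast; ring
    have hprod : μp * μm = ((4*a₁^2 + 4*a₂^2 : ℝ) : ℂ) := by
      rw [hμp, hμm]; push_cast; ring_nf; rw [Complex.I_sq]; ring
    have hrs0 : ∀ (r : ℝ) (w : ℂ ⊗[ℝ] (V₀ × V₀)), r • w = ((r : ℂ)) • w := by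
      intro r w; rw [show ((r:ℂ)) = algebraMap ℝ ℂ r from rfl, algebraMap_smul]
    rw [hsum, hprod]
    intro w
    induction w using TensorProduct.induction_on with
    | zero => simp
    | tmul c v =>
        simp only [hF, LinearMap.baseChange_tmul]
        rw [hquadR v, tmul_sub, tmul_smul, tmul_smul, hrs0, hrs0]
    | add x y hx hy => simp only [map_add, smul_add, hx, hy]; abel
  have hμne : μp - μm = ((4*a₂ : ℝ) : ℂ) * Complex.I := by rw [hμp, hμm]; push_cast; ring
  have hcne : ((4*a₂ : ℝ) : ℂ) * Complex.I ≠ 0 :=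
    mul_ne_zero (Complex.ofReal_ne_zero.mpr (by positivity)) Complex.I_ne_zero
  -- Part 3 : complex diagonalizable
  have part3 : IsCDiagonalizable ρ := by
    rw [IsCDiagonalizable]
    rw [eq_top_iff]
    intro w _
    have hdiffne : μp - μm ≠ 0 := by rw [hμne]; exact hcne
    set wp := (μp - μm)⁻¹ • (F w - μm • w) with hwp
    set wm := (μp - μm)⁻¹ • (μp • w - F w) with hwm
    have hmemp : wp ∈ Module.End.eigenspace F μp := by
      rw [Module.End.mem_eigenspace_iff, hwp, map_smul, map_sub, map_smul, hquadC w]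
      module
    have hmemm : wm ∈ Module.End.eigenspace F μm := by
      rw [Module.End.mem_eigenspace_iff, hwm, map_smul, map_sub, map_smul, hquadC w]
      module
    have hsum : wp + wm = w := by
      have h : wp + wm = (μp - μm)⁻¹ • ((μp - μm) • w) := by rw [hwp, hwm]; module
      rw [h, smul_smul, inv_mul_cancel₀ hdiffne, one_smul]
    rw [← hsum]
    exact Submodule.add_mem _
      (Submodule.mem_iSup_of_mem μp hmemp) (Submodule.mem_iSup_of_mem μm hmemm)
  -- eigenvectors for part 4
  obtain ⟨x, hx⟩ := exists_ne (0 : V₀)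
  set u : V₀ × V₀ := (x, 0) with hu
  set vv : V₀ × V₀ := (0, x) with hvv
  have hρu : ρ u = (2*a₁) • u + (2*a₂) • vv := by
    rw [hrho u]; refine Prod.ext ?_ ?_ <;> simp [hu, hvv]
  have hρv : ρ vv = (-(2*a₂)) • u + (2*a₁) • vv := by
    rw [hrho vv]; refine Prod.ext ?_ ?_ <;> simp [hu, hvv]
  have htmI : ∀ m : V₀ × V₀, (Complex.I ⊗ₜ[ℝ] m) = Complex.I • ((1:ℂ) ⊗ₜ[ℝ] m) := by
    intro m; rw [TensorProduct.smul_tmul']; simp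
  have hrs : ∀ (r : ℝ) (w : ℂ ⊗[ℝ] (V₀ × V₀)), r • w = ((r : ℂ)) • w := by
    intro r w; rw [show ((r:ℂ)) = algebraMap ℝ ℂ r from rfl, algebraMap_smul]
  set wp : ℂ ⊗[ℝ] (V₀ × V₀) := (1:ℂ) ⊗ₜ u - Complex.I ⊗ₜ vv with hwp
  set wm : ℂ ⊗[ℝ] (V₀ × V₀) := (1:ℂ) ⊗ₜ u + Complex.I ⊗ₜ vv with hwm
  have heqp : F wp = μp • wp := by
    rw [hwp, map_sub, hF, LinearMap.baseChange_tmul, LinearMap.baseChange_tmul, hρu, hρv]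
    simp only [tmul_add, tmul_smul, hrs, htmI]
    match_scalars
    all_goals ring_nf
    all_goals try rw [Complex.I_sq]
    all_goals (rw [hμp]; push_cast; ring_nf)
    all_goals (rw [Complex.I_sq]; ring)
  have heqm : F wm = μm • wm := by
    rw [hwm, map_add, hF, LinearMap.baseChange_tmul, LinearMap.baseChange_tmul, hρu, hρv]
    simp only [tmul_add, tmul_smul, hrs, htmI]
    match_scalars
    all_goals ring_nf
    all_goals try rw [Complex.I_sq]
    all_goals (rw [hμm]; push_cast; ring_nf)
    all_goals (rw [Complex.I_sq]; ring)
  set φ : ℂ ⊗[ℝ] (V₀ × V₀) →ₗ[ℝ] (V₀ × V₀) :=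
    TensorProduct.lift ((LinearMap.lsmul ℝ (V₀ × V₀)).comp Complex.reLm) with hφ
  have hφt : ∀ (c : ℂ) (m : V₀ × V₀), φ (c ⊗ₜ m) = c.re • m := by
    intro c m; simp [hφ]
  have hwpne : wp ≠ 0 := by
    intro h
    have := congrArg φ h
    rw [hwp, map_sub, hφt, hφt, map_zero] at this
    simp only [Complex.one_re, one_smul, Complex.I_re, zero_smul, sub_zero] at this
    exact hx (congrArg Prod.fst this)
  have hwmne : wm ≠ 0 := by
    intro h
    have := congrArg φ h
    rw [hwm, map_add, hφt, hφt, map_zero] at this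
    simp only [Complex.one_re, one_smul, Complex.I_re, zero_smul, add_zero] at this
    exact hx (congrArg Prod.fst this)
  -- Part 4 : spectrum
  have part4 : spectrum ℂ F = {μp, μm} := by
    apply Set.eq_of_subset_of_subset
    · intro μ hμ
      have hev : Module.End.HasEigenvalue F μ :=
        Module.End.hasEigenvalue_iff_mem_spectrum.mpr hμ
      obtain ⟨v, hv⟩ := hev.exists_hasEigenvector
      have h1 : F v = μ • v := Module.End.mem_eigenspace_iff.mp hv.1
      have h2 := hquadC v
      rw [h1, map_smul, h1] at h2
      have h3 : ((μ - μp) * (μ - μm)) • v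
          = μ • μ • v - ((μp + μm) • μ • v - (μp * μm) • v) := by module
      rw [← h2] at h3
      simp only [sub_self] at h3
      rcases mul_eq_zero.mp ((smul_eq_zero.mp h3).resolve_right hv.2) with h | h
      · left; exact sub_eq_zero.mp h
      · right; exact sub_eq_zero.mp h
    · intro μ hμ
      rcases hμ with h | h
      · rw [h]
        exact Module.End.hasEigenvalue_iff_mem_spectrum.mp
          (Module.End.hasEigenvalue_of_hasEigenvector
            ⟨Module.End.mem_eigenspace_iff.mpr heqp, hwpne⟩)
      · rw [Set.mem_singleton_iff.mp h]
        exact Module.End.hasEigenvalue_iff_mem_spectrum.mp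
          (Module.End.hasEigenvalue_of_hasEigenvector
            ⟨Module.End.mem_eigenspace_iff.mpr heqm, hwmne⟩)
  -- Part 5 : the complex structure
  have part5 : ∀ x y : V₀, (2 * a₂)⁻¹ • (ρ (x, y) - (2 * a₁) • (x, y)) = (-y, x) := by
    intro x y
    rw [hrho (x, y)]
    refine Prod.ext ?_ ?_ <;>
      simp only [Prod.fst_sub, Prod.snd_sub, Prod.smul_fst, Prod.smul_snd]
    · have h : ((2*a₁) • x - (2*a₂) • y - (2*a₁) • x : V₀) = -((2*a₂) • y) := by module
      rw [h, smul_neg, smul_smul, inv_mul_cancel₀ h2a, one_smul]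
    · have h : ((2*a₂) • x + (2*a₁) • y - (2*a₁) • y : V₀) = (2*a₂) • x := by module
      rw [h, smul_smul, inv_mul_cancel₀ h2a, one_smul]
  exact ⟨part1, part2, part3, part4, part5⟩
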